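/- (Relative entropy chain rule for classical-quantum states.) Let Z be a finite set, let P and P' be probability distributions on Z with P(z) > 0 and P'(z) > 0 for all z, and for each z ∈ Z let ρ_z and ρ'_z be positive definite d×d density matrices. Define the block-diagonal matrices ρ = Σ_z P(z) · E_{zz} ⊗ ρ_z and ρ' = Σ_z P'(z) · E_{zz} ⊗ ρ'_z, where E_{zz} is the diagonal matrix unit indexed by z and ⊗ is the Kronecker product. Then S(ρ' ‖ ρ) = D(P' ‖ P) + Σ_z P'(z) · S(ρ'_z ‖ ρ_z), where for positive definite matrices A, B of the same trace-class setting, S(A ‖ B) = Re Tr(A (log A − log B)) with log the matrix logarithm (obtained by applying the real logarithm to the eigenvalues in a spectral decomposition), and D(P' ‖ P) = Σ_z P'(z) · log(P'(z)/P(z)) is the Kullback–Leibler divergence with the same (natural) logarithm. -/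

import Mathlib

open scoped ComplexOrder

open Matrix Kronecker

/-- The matrix logarithm of a Hermitian matrix via its spectral decomposition (applying the
real logarithm to the eigenvalues, with the junk convention `Real.log 0 = 0` on the kernel). -/
noncomputable def hermLog {n : Type*} [Fintype n] [DecidableEq n]
    {A : Matrix n n ℂ} (hA : A.IsHermitian) : Matrix n n ℂ :=
  (hA.eigenvectorUnitary : Matrix n n ℂ) *
    Matrix.diagonal (fun j => (Real.log (hA.eigenvalues j) : ℂ)) *
    star (hA.eigenvectorUnitary : Matrix n n ℂ)

namespace Stmt17Aux

open Polynomial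

variable {n : Type*} [Fintype n] [DecidableEq n]

lemma aeval_diag (g : n → ℂ) (p : ℂ[X]) :
    aeval (Matrix.diagonal g) p = Matrix.diagonal (fun i => p.eval (g i)) := by
  rw [show Matrix.diagonal g = Matrix.diagonalAlgHom ℂ g from rfl, aeval_algHom_apply]
  have : (aeval g) p = fun i => p.eval (g i) := by
    funext i
    rw [show (aeval g p) i = Pi.evalAlgHom ℂ (fun _ => ℂ) i (aeval g p) from rfl,
      ← aeval_algHom_apply]
    simp [← coe_aeval_eq_eval]
  rw [this]
  rfl

lemma conj_pow (W A : Matrix n n ℂ) (hW : W ∈ Matrix.unitaryGroup n ℂ) (k : ℕ) :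
    (W * A * star W) ^ k = W * A ^ k * star W := by
  induction k with
  | zero => simpa using (Matrix.mem_unitaryGroup_iff.mp hW).symm
  | succ k ih =>
    rw [pow_succ, pow_succ, ih]
    have h' : star W * W = 1 := Matrix.mem_unitaryGroup_iff'.mp hW
    calc W * A ^ k * star W * (W * A * star W)
        = W * (A ^ k * ((star W * W) * (A * star W))) := by simp only [mul_assoc]
      _ = W * (A ^ k * A) * star W := by rw [h', one_mul, mul_assoc, mul_assoc]

lemma aeval_conj (W A : Matrix n n ℂ) (hW : W ∈ Matrix.unitaryGroup n ℂ) (p : ℂ[X]) :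
    aeval (W * A * star W) p = W * aeval A p * star W := by
  induction p using Polynomial.induction_on' with
  | add p q hp hq => simp [map_add, hp, hq, Matrix.mul_add, Matrix.add_mul]
  | monomial k c =>
    rw [aeval_monomial, aeval_monomial, conj_pow W A hW k]
    rw [Algebra.algebraMap_eq_smul_one, smul_mul_assoc, smul_mul_assoc, one_mul, one_mul,
      Matrix.mul_smul, Matrix.smul_mul]

lemma key_conj (A : Matrix n n ℂ) (W : Matrix n n ℂ) (hW : W ∈ Matrix.unitaryGroup n ℂ)
    (g : n → ℝ) (hAW : A = W * Matrix.diagonal (fun i => (g i : ℂ)) * star W)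
    (p : ℂ[X]) (hp : ∀ i, p.eval ((g i : ℝ) : ℂ) = ((Real.log (g i) : ℝ) : ℂ)) :
    aeval A p = W * Matrix.diagonal (fun i => (Real.log (g i) : ℂ)) * star W := by
  rw [hAW, aeval_conj _ _ hW, aeval_diag]
  rw [show (fun i => p.eval ((g i : ℝ) : ℂ)) = fun i => ((Real.log (g i) : ℝ) : ℂ) from
    funext hp]

lemma spectral' {A : Matrix n n ℂ} (hA : A.IsHermitian) :
    A = (hA.eigenvectorUnitary : Matrix n n ℂ) *
      Matrix.diagonal (fun i => ((hA.eigenvalues i : ℝ) : ℂ)) *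
      star (hA.eigenvectorUnitary : Matrix n n ℂ) := by
  have h := hA.spectral_theorem
  rw [Unitary.conjStarAlgAut_apply] at h
  exact h

lemma hermLog_eq_of_decomp {A : Matrix n n ℂ} (hA : A.IsHermitian)
    (W : Matrix n n ℂ) (hW : W ∈ Matrix.unitaryGroup n ℂ) (f : n → ℝ)
    (hAW : A = W * Matrix.diagonal (fun i => (f i : ℂ)) * star W) :
    hermLog hA = W * Matrix.diagonal (fun i => (Real.log (f i) : ℂ)) * star W := by
  classical
  set s : Finset ℂ := (Finset.univ.image fun i => ((hA.eigenvalues i : ℝ) : ℂ)) ∪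
      (Finset.univ.image fun i => ((f i : ℝ) : ℂ)) with hs
  set v : ℂ → ℂ := fun x => (Real.log x.re : ℂ) with hv
  set p : ℂ[X] := Lagrange.interpolate s id v with hpdef
  have hnode : ∀ x ∈ s, p.eval x = v x := by
    intro x hx
    have := Lagrange.eval_interpolate_at_node v (Set.injOn_id _) hx
    simpa [hpdef] using this
  have hp1 : ∀ i, p.eval ((hA.eigenvalues i : ℝ) : ℂ) = ((Real.log (hA.eigenvalues i) : ℝ) : ℂ) := by
    intro i
    rw [hnode _ (Finset.mem_union_left _ (Finset.mem_image_of_mem _ (Finset.mem_univ i)))]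
    simp [hv]
  have hp2 : ∀ i, p.eval ((f i : ℝ) : ℂ) = ((Real.log (f i) : ℝ) : ℂ) := by
    intro i
    rw [hnode _ (Finset.mem_union_right _ (Finset.mem_image_of_mem _ (Finset.mem_univ i)))]
    simp [hv]
  have h1 := key_conj A _ hA.eigenvectorUnitary.2 hA.eigenvalues (spectral' hA) p hp1
  have h2 := key_conj A W hW f hAW p hp2
  rw [hermLog, ← h1, h2]

variable {Z : Type*} [Fintype Z] [DecidableEq Z] {d : ℕ}

noncomputable def blk (M : Z → Matrix (Fin d) (Fin d) ℂ) : Matrix (Z × Fin d) (Z × Fin d) ℂ :=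
  ∑ z, Matrix.single z z (1 : ℂ) ⊗ₖ M z

lemma blk_apply (M : Z → Matrix (Fin d) (Fin d) ℂ) (z w : Z) (i j : Fin d) :
    blk M (z, i) (w, j) = if z = w then M z i j else 0 := by
  classical
  simp only [blk, Matrix.sum_apply, Matrix.kroneckerMap_apply, Matrix.single,
    Matrix.of_apply]
  rcases eq_or_ne z w with h | h
  · subst h
    rw [Finset.sum_eq_single z]
    · simp
    · intro u _ hu
      simp [hu]
    · simp
  · rw [if_neg h]
    apply Finset.sum_eq_zero
    intro u _
    rcases eq_or_ne u z with rfl | hu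
    · simp [h]
    · simp [hu]

lemma blk_mul (M N : Z → Matrix (Fin d) (Fin d) ℂ) :
    blk M * blk N = blk (fun z => M z * N z) := by
  classical
  simp only [blk, Finset.sum_mul, Finset.mul_sum]
  refine Finset.sum_congr rfl fun z _ => ?_
  rw [Finset.sum_eq_single z]
  · rw [← Matrix.mul_kronecker_mul, Matrix.single_mul_single_same, one_mul]
  · intro w _ hw
    rw [← Matrix.mul_kronecker_mul]
    rw [show Matrix.single w w (1:ℂ) * Matrix.single z z (1:ℂ) = 0 from
      Matrix.single_mul_single_of_ne (h := hw) ..]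
    simp
  · simp

lemma blk_one : blk (fun _ : Z => (1 : Matrix (Fin d) (Fin d) ℂ)) = 1 := by
  ext ⟨z, i⟩ ⟨w, j⟩
  rw [blk_apply]
  simp only [Matrix.one_apply, Prod.mk.injEq]
  split_ifs with h1 h2 h3 <;> simp_all

lemma blk_conjTranspose (M : Z → Matrix (Fin d) (Fin d) ℂ) :
    (blk M)ᴴ = blk (fun z => (M z)ᴴ) := by
  ext ⟨z, i⟩ ⟨w, j⟩
  rw [Matrix.conjTranspose_apply, blk_apply, blk_apply]
  rcases eq_or_ne z w with rfl | h
  · simp [Matrix.conjTranspose_apply]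
  · simp [h, Ne.symm h]

lemma blk_diagonal (g : Z → Fin d → ℂ) :
    blk (fun z => Matrix.diagonal (g z)) = Matrix.diagonal (fun zi : Z × Fin d => g zi.1 zi.2) := by
  ext ⟨z, i⟩ ⟨w, j⟩
  rw [blk_apply]
  rcases eq_or_ne z w with rfl | h
  · rcases eq_or_ne i j with rfl | hij
    · simp [Matrix.diagonal_apply]
    · simp [Matrix.diagonal_apply, hij, Prod.ext_iff]
  · simp [Matrix.diagonal_apply, h, Prod.ext_iff]

lemma blk_sub (M N : Z → Matrix (Fin d) (Fin d) ℂ) :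
    blk M - blk N = blk (fun z => M z - N z) := by
  ext ⟨z, i⟩ ⟨w, j⟩
  rw [Matrix.sub_apply, blk_apply, blk_apply, blk_apply]
  split_ifs <;> simp

lemma blk_trace (M : Z → Matrix (Fin d) (Fin d) ℂ) :
    (blk M).trace = ∑ z, (M z).trace := by
  classical
  rw [blk, Matrix.trace_sum]
  refine Finset.sum_congr rfl fun z _ => ?_
  rw [Matrix.trace_kronecker]
  have : (Matrix.single z z (1 : ℂ)).trace = 1 := by
    rw [Matrix.trace, Matrix.diag_single_same]
    simp
  rw [this, one_mul]

lemma blk_unitary (U : Z → Matrix (Fin d) (Fin d) ℂ)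
    (hU : ∀ z, U z ∈ Matrix.unitaryGroup (Fin d) ℂ) :
    blk U ∈ Matrix.unitaryGroup (Z × Fin d) ℂ := by
  rw [Matrix.mem_unitaryGroup_iff]
  rw [Matrix.star_eq_conjTranspose, blk_conjTranspose, blk_mul]
  have h : (fun z => U z * (U z)ᴴ) = fun _ : Z => (1 : Matrix (Fin d) (Fin d) ℂ) := by
    funext z
    rw [← Matrix.star_eq_conjTranspose]
    exact Matrix.mem_unitaryGroup_iff.mp (hU z)
  rw [h]
  exact blk_one

lemma diagonal_const (c : ℂ) :
    Matrix.diagonal (fun _ : Fin d => c) = c • (1 : Matrix (Fin d) (Fin d) ℂ) := by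
  ext i j
  rcases eq_or_ne i j with rfl | h
  · simp
  · simp [Matrix.diagonal_apply, h, Matrix.one_apply, h]

/-- The key block computation: the `hermLog` of a block-diagonal positive matrix. -/
lemma hermLog_blk (P : Z → ℝ) (hP : ∀ z, 0 < P z)
    (ρ : Z → Matrix (Fin d) (Fin d) ℂ) (hρ : ∀ z, (ρ z).PosDef)
    (R : Matrix (Z × Fin d) (Z × Fin d) ℂ)
    (hRblk : R = blk (fun z => (P z : ℂ) • ρ z)) (hRH : R.IsHermitian) :
    hermLog hRH = blk (fun z =>
      ((Real.log (P z) : ℝ) : ℂ) • 1 + hermLog (hρ z).isHermitian) := by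
  classical
  set U : Z → Matrix (Fin d) (Fin d) ℂ :=
    fun z => ((hρ z).isHermitian.eigenvectorUnitary : Matrix (Fin d) (Fin d) ℂ) with hUdef
  set μ : Z → Fin d → ℝ := fun z => (hρ z).isHermitian.eigenvalues with hμdef
  have hUmem : ∀ z, U z ∈ Matrix.unitaryGroup (Fin d) ℂ := fun z =>
    (hρ z).isHermitian.eigenvectorUnitary.2
  have hW : blk U ∈ Matrix.unitaryGroup (Z × Fin d) ℂ := blk_unitary U hUmem
  have hstar : star (blk U) = blk (fun z => star (U z)) := by
    rw [Matrix.star_eq_conjTranspose, blk_conjTranspose]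
    rfl
  set f : Z × Fin d → ℝ := fun zi => P zi.1 * μ zi.1 zi.2 with hfdef
  have hperz : ∀ z, (P z : ℂ) • ρ z =
      U z * Matrix.diagonal (fun j => ((f (z, j) : ℝ) : ℂ)) * star (U z) := by
    intro z
    have hdiag : Matrix.diagonal (fun j => ((f (z, j) : ℝ) : ℂ)) =
        (P z : ℂ) • Matrix.diagonal (fun j => ((μ z j : ℝ) : ℂ)) := by
      ext j k
      rcases eq_or_ne j k with rfl | h
      · simp only [Matrix.diagonal_apply_eq, Matrix.smul_apply, smul_eq_mul, hfdef]
        push_cast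
        ring
      · simp [Matrix.diagonal_apply_ne _ h]
    rw [hdiag, Matrix.mul_smul, Matrix.smul_mul]
    congr 1
    exact spectral' (hρ z).isHermitian
  have hdecomp : R = blk U * Matrix.diagonal (fun zi : Z × Fin d => ((f zi : ℝ) : ℂ))
      * star (blk U) := by
    rw [hstar, show Matrix.diagonal (fun zi : Z × Fin d => ((f zi : ℝ) : ℂ)) =
        blk (fun z => Matrix.diagonal (fun j => ((f (z, j) : ℝ) : ℂ))) from
      (blk_diagonal (fun z j => ((f (z, j) : ℝ) : ℂ))).symm]
    rw [blk_mul, blk_mul, hRblk]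
    exact congrArg blk (funext fun z => hperz z)
  have hperz2 : ∀ z, U z * Matrix.diagonal (fun j => ((Real.log (f (z, j)) : ℝ) : ℂ))
      * star (U z) = ((Real.log (P z) : ℝ) : ℂ) • 1 + hermLog (hρ z).isHermitian := by
    intro z
    have hlog : (fun j => ((Real.log (f (z, j)) : ℝ) : ℂ)) =
        fun j => ((Real.log (P z) : ℝ) : ℂ) + ((Real.log (μ z j) : ℝ) : ℂ) := by
      funext j
      have h1 : Real.log (f (z, j)) = Real.log (P z) + Real.log (μ z j) :=
        Real.log_mul (hP z).ne' ((hρ z).eigenvalues_pos j).ne'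
      rw [h1]
      push_cast
      ring
    rw [hlog]
    have hsplit : Matrix.diagonal (fun j : Fin d =>
        ((Real.log (P z) : ℝ) : ℂ) + ((Real.log (μ z j) : ℝ) : ℂ)) =
        ((Real.log (P z) : ℝ) : ℂ) • 1 +
          Matrix.diagonal (fun j => ((Real.log (μ z j) : ℝ) : ℂ)) := by
      rw [← diagonal_const, ← Matrix.diagonal_add]
    rw [hsplit, Matrix.mul_add, Matrix.add_mul, Matrix.mul_smul, Matrix.smul_mul, mul_one,
      Matrix.mem_unitaryGroup_iff.mp (hUmem z)]
    rfl
  have hmain := hermLog_eq_of_decomp hRH (blk U) hW f hdecomp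
  rw [hmain, hstar,
    show Matrix.diagonal (fun zi : Z × Fin d => ((Real.log (f zi) : ℝ) : ℂ)) =
      blk (fun z => Matrix.diagonal (fun j => ((Real.log (f (z, j)) : ℝ) : ℂ))) from
    (blk_diagonal (fun z j => ((Real.log (f (z, j)) : ℝ) : ℂ))).symm]
  rw [blk_mul, blk_mul]
  exact congrArg blk (funext fun z => hperz2 z)

end Stmt17Aux

theorem stmt17 (Z : Type) [Fintype Z] [DecidableEq Z] [Nonempty Z]
    (d : ℕ) (hd : 1 ≤ d)
    (P P' : Z → ℝ) (hP : ∀ z, 0 < P z) (hP' : ∀ z, 0 < P' z)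
    (hPsum : ∑ z, P z = 1) (hP'sum : ∑ z, P' z = 1)
    (ρ ρ' : Z → Matrix (Fin d) (Fin d) ℂ)
    (hρ : ∀ z, (ρ z).PosDef) (hρ' : ∀ z, (ρ' z).PosDef)
    (hρ1 : ∀ z, (ρ z).trace = 1) (hρ'1 : ∀ z, (ρ' z).trace = 1)
    (R R' : Matrix (Z × Fin d) (Z × Fin d) ℂ)
    (hR : R = ∑ z, (P z : ℂ) • (Matrix.single z z (1 : ℂ) ⊗ₖ ρ z))
    (hR' : R' = ∑ z, (P' z : ℂ) • (Matrix.single z z (1 : ℂ) ⊗ₖ ρ' z))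
    (hRH : R.IsHermitian) (hR'H : R'.IsHermitian) :
    (Matrix.trace (R' * (hermLog hR'H - hermLog hRH))).re =
      (∑ z, P' z * Real.log (P' z / P z)) +
        ∑ z, P' z *
          (Matrix.trace (ρ' z * (hermLog (hρ' z).isHermitian -
            hermLog (hρ z).isHermitian))).re := by
  classical
  open Stmt17Aux in
  have hRblk : R = blk (fun z => (P z : ℂ) • ρ z) := by
    rw [hR, blk]
    refine Finset.sum_congr rfl fun z _ => ?_
    rw [Matrix.kronecker_smul]
  have hR'blk : R' = blk (fun z => (P' z : ℂ) • ρ' z) := by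
    rw [hR', blk]
    refine Finset.sum_congr rfl fun z _ => ?_
    rw [Matrix.kronecker_smul]
  have hlogR := Stmt17Aux.hermLog_blk P hP ρ hρ R hRblk hRH
  have hlogR' := Stmt17Aux.hermLog_blk P' hP' ρ' hρ' R' hR'blk hR'H
  rw [hlogR, hlogR', hR'blk, Stmt17Aux.blk_sub, Stmt17Aux.blk_mul, Stmt17Aux.blk_trace]
  have hterm : ∀ z : Z,
      ((P' z : ℂ) • ρ' z *
        ((((Real.log (P' z) : ℝ) : ℂ) • 1 + hermLog (hρ' z).isHermitian) -
         (((Real.log (P z) : ℝ) : ℂ) • 1 + hermLog (hρ z).isHermitian))).trace =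
      (P' z : ℂ) * (((Real.log (P' z) - Real.log (P z) : ℝ) : ℂ) +
        (ρ' z * (hermLog (hρ' z).isHermitian - hermLog (hρ z).isHermitian)).trace) := by
    intro z
    have hrearr : ((((Real.log (P' z) : ℝ) : ℂ) • 1 + hermLog (hρ' z).isHermitian) -
        (((Real.log (P z) : ℝ) : ℂ) • 1 + hermLog (hρ z).isHermitian)) =
        (((Real.log (P' z) - Real.log (P z) : ℝ) : ℂ)) • 1 +
          (hermLog (hρ' z).isHermitian - hermLog (hρ z).isHermitian) := by
      push_cast
      rw [sub_smul]
      abel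
    rw [hrearr]
    simp only [Matrix.smul_mul, Matrix.mul_add, Matrix.mul_smul, Matrix.trace_smul,
      Matrix.trace_add, mul_one, smul_eq_mul, hρ'1 z]
    ring
  rw [Finset.sum_congr rfl fun z _ => hterm z]
  have hre : (∑ z, (P' z : ℂ) * (((Real.log (P' z) - Real.log (P z) : ℝ) : ℂ) +
      (ρ' z * (hermLog (hρ' z).isHermitian - hermLog (hρ z).isHermitian)).trace)).re =
      ∑ z, P' z * ((Real.log (P' z) - Real.log (P z)) +
        ((ρ' z * (hermLog (hρ' z).isHermitian - hermLog (hρ z).isHermitian)).trace).re) := by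
    rw [Complex.re_sum]
    refine Finset.sum_congr rfl fun z _ => ?_
    rw [Complex.re_ofReal_mul, Complex.add_re, Complex.ofReal_re]
  rw [hre]
  rw [← Finset.sum_add_distrib]
  refine Finset.sum_congr rfl fun z _ => ?_
  rw [Real.log_div (hP' z).ne' (hP z).ne']
  ring
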